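/- The time-varying-delay modified wave variable transformation is passive: if û2(t) = g1(t) u1(t − T2(t)) and v̂1(t) = g2(t) v2(t − T1(t)) with g1²(t) ≤ 1 − T2'(t), g2²(t) ≤ 1 − T1'(t), T1'(t) ≤ 1, T2'(t) ≤ 1, and all signals vanish for negative time, then ∫_0^T û2ᵀû2 dt ≤ ∫_0^T u1ᵀu1 dt and ∫_0^T v̂1ᵀv̂1 dt ≤ ∫_0^T v2ᵀv2 dt for all T ≥ 0. -/
import Mathlib

open MeasureTheory Set

lemma key_bound {m : ℕ} (T2 dT2 : ℝ → ℝ)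
    (hT2nonneg : ∀ t, 0 ≤ T2 t)
    (hT2deriv : ∀ t, HasDerivAt T2 (dT2 t) t)
    (hdT2 : ∀ t, dT2 t ≤ 1)
    (g1 : ℝ → ℝ) (hg1 : ∀ t, g1 t ^ 2 ≤ 1 - dT2 t)
    (u1 : ℝ → EuclideanSpace ℝ (Fin m))
    (hu1zero : ∀ t < (0:ℝ), u1 t = 0)
    (T : ℝ) (hT : 0 ≤ T)
    (hu1int : IntervalIntegrable (fun t => ‖u1 t‖ ^ 2) volume 0 T)
    (hLint : IntervalIntegrable (fun t => ‖g1 t • u1 (t - T2 t)‖ ^ 2) volume 0 T) :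
    (∫ t in (0:ℝ)..T, ‖g1 t • u1 (t - T2 t)‖ ^ 2) ≤ ∫ t in (0:ℝ)..T, ‖u1 t‖ ^ 2 := by
  set s : ℝ → ℝ := fun t => t - T2 t with hs_def
  set h : ℝ → ℝ := fun t => ‖u1 t‖ ^ 2 with hh_def
  have hh_nonneg : ∀ t, 0 ≤ h t := fun t => sq_nonneg _
  have hs : ∀ t, HasDerivAt s (1 - dT2 t) t := fun t =>
    ((hasDerivAt_id t).sub (hT2deriv t)).congr_deriv rfl
  have hs'_nonneg : ∀ t, 0 ≤ 1 - dT2 t := fun t => sub_nonneg.2 (hdT2 t)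
  have hderiv_eq : deriv s = fun t => 1 - dT2 t := funext fun t => (hs t).deriv
  have hmono : Monotone s :=
    monotone_of_deriv_nonneg (fun t => (hs t).differentiableAt)
      (fun t => by rw [hderiv_eq]; exact hs'_nonneg t)
  -- strict increase from points with positive derivative
  have hstrict : ∀ a b : ℝ, dT2 a < 1 → a < b → s a < s b := by
    intro a b haA hab
    rcases lt_or_eq_of_le (hmono hab.le) with h' | h'
    · exact h'
    · exfalso
      have hconst : ∀ x ∈ Icc a b, s x = s a := by
        intro x hx
        exact le_antisymm (h' ▸ hmono hx.2) (hmono hx.1)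
      have h1 : HasDerivWithinAt s (1 - dT2 a) (Icc a b) a := (hs a).hasDerivWithinAt
      have h2 : HasDerivWithinAt s 0 (Icc a b) a := by
        have hc : HasDerivWithinAt (fun _ : ℝ => s a) 0 (Icc a b) a :=
          hasDerivWithinAt_const _ _ _
        exact hc.congr hconst (hconst a ⟨le_rfl, hab.le⟩)
      have hu : UniqueDiffWithinAt ℝ (Icc a b) a :=
        (uniqueDiffOn_Icc hab) a ⟨le_rfl, hab.le⟩
      have := hu.eq_deriv _ h1 h2
      linarith
  set A : Set ℝ := {t | dT2 t < 1} with hA_def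
  have hdT2meas : Measurable dT2 := by
    have : dT2 = deriv T2 := funext fun t => ((hT2deriv t).deriv).symm
    rw [this]; exact measurable_deriv T2
  have hAmeas : MeasurableSet A := measurableSet_lt hdT2meas measurable_const
  set S : Set ℝ := Icc 0 T ∩ A with hS_def
  have hSmeas : MeasurableSet S := measurableSet_Icc.inter hAmeas
  have hinj : InjOn s S := by
    intro a ha b hb hab
    by_contra hne
    rcases lt_or_gt_of_ne hne with hlt | hlt
    · exact absurd hab (ne_of_lt (hstrict a b ha.2 hlt))
    · exact absurd hab.symm (ne_of_lt (hstrict b a hb.2 hlt))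
  have hs0 : s 0 ≤ 0 := by simp only [hs_def]; linarith [hT2nonneg 0]
  have hE_sub : s '' S ⊆ Icc (s 0) T := by
    rintro _ ⟨x, ⟨⟨hx0, hxT⟩, _⟩, rfl⟩
    exact ⟨hmono hx0, le_trans (by simp only [hs_def]; linarith [hT2nonneg x]) hxT⟩
  -- integrability of h on Icc (s 0) T
  have hIcoZero : ∀ x ∈ Ico (s 0) (0:ℝ), h x = 0 := by
    intro x hx
    simp [hh_def, hu1zero x hx.2]
  have hIcoInt : IntegrableOn h (Ico (s 0) 0) := by
    apply (integrableOn_congr_fun (fun x hx => (hIcoZero x hx).symm) measurableSet_Ico).1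
    exact integrableOn_zero
  have hIccInt0T : IntegrableOn h (Icc 0 T) := by
    rw [integrableOn_Icc_iff_integrableOn_Ioc]
    exact (intervalIntegrable_iff_integrableOn_Ioc_of_le hT).1 hu1int
  have hsplit : Ico (s 0) 0 ∪ Icc 0 T = Icc (s 0) T := Ico_union_Icc_eq_Icc hs0 hT
  have hIccInt : IntegrableOn h (Icc (s 0) T) := by
    rw [← hsplit]; exact hIcoInt.union hIccInt0T
  have hEint : IntegrableOn h (s '' S) := hIccInt.mono_set hE_sub
  have hSderiv : ∀ x ∈ S, HasDerivWithinAt s (1 - dT2 x) S x :=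
    fun x _ => (hs x).hasDerivWithinAt
  have habs : (fun t => |1 - dT2 t| • h (s t)) = fun t => (1 - dT2 t) * h (s t) := by
    funext t; simp [abs_of_nonneg (hs'_nonneg t), smul_eq_mul]
  have hSint : IntegrableOn (fun t => (1 - dT2 t) * h (s t)) S := by
    rw [← habs]
    exact (integrableOn_image_iff_integrableOn_abs_deriv_smul hSmeas hSderiv hinj h).1 hEint
  have hcomplZero : ∀ x ∈ Icc 0 T \ A, (1 - dT2 x) * h (s x) = 0 := by
    intro x hx
    have : dT2 x = 1 := le_antisymm (hdT2 x) (not_lt.1 hx.2)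
    simp [this]
  have hcomplInt : IntegrableOn (fun t => (1 - dT2 t) * h (s t)) (Icc 0 T \ A) := by
    apply (integrableOn_congr_fun (fun x hx => (hcomplZero x hx).symm)
      (measurableSet_Icc.diff hAmeas)).1
    exact integrableOn_zero
  have hsplit2 : S ∪ (Icc 0 T \ A) = Icc 0 T := Set.inter_union_diff _ _
  have hRIccInt : IntegrableOn (fun t => (1 - dT2 t) * h (s t)) (Icc 0 T) := by
    rw [← hsplit2]; exact hSint.union hcomplInt
  have hRint : IntervalIntegrable (fun t => (1 - dT2 t) * h (s t)) volume 0 T := by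
    rw [intervalIntegrable_iff_integrableOn_Ioc_of_le hT]
    exact hRIccInt.mono_set Ioc_subset_Icc_self
  -- step 1: pointwise bound
  have step1 : (∫ t in (0:ℝ)..T, ‖g1 t • u1 (t - T2 t)‖ ^ 2)
      ≤ ∫ t in (0:ℝ)..T, (1 - dT2 t) * h (s t) := by
    apply intervalIntegral.integral_mono_on hT hLint hRint
    intro t _
    have : ‖g1 t • u1 (t - T2 t)‖ ^ 2 = g1 t ^ 2 * h (s t) := by
      rw [norm_smul, mul_pow, Real.norm_eq_abs, sq_abs]
    rw [this]
    exact mul_le_mul_of_nonneg_right (hg1 t) (hh_nonneg _)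
  -- step 2: change of variables
  have hdisj : Disjoint S (Icc 0 T \ A) := by
    apply Set.disjoint_left.2
    rintro x ⟨_, hxA⟩ ⟨_, hxA'⟩
    exact hxA' hxA
  have step2 : (∫ t in (0:ℝ)..T, (1 - dT2 t) * h (s t)) = ∫ x in s '' S, h x := by
    rw [intervalIntegral.integral_of_le hT, ← integral_Icc_eq_integral_Ioc, ← hsplit2,
      setIntegral_union hdisj (measurableSet_Icc.diff hAmeas) hSint hcomplInt,
      setIntegral_congr_fun (measurableSet_Icc.diff hAmeas) hcomplZero, integral_zero, add_zero,
      integral_image_eq_integral_abs_deriv_smul hSmeas hSderiv hinj h, habs]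
  -- step 3: compare with the full interval
  have hdisj2 : Disjoint (Ico (s 0) (0:ℝ)) (Icc 0 T) := by
    apply Set.disjoint_left.2
    rintro x hx hx'
    exact absurd hx'.1 (not_le.2 hx.2)
  have step3 : (∫ x in s '' S, h x) ≤ ∫ t in (0:ℝ)..T, h t := by
    have hle : (∫ x in s '' S, h x) ≤ ∫ x in Icc (s 0) T, h x := by
      apply setIntegral_mono_set hIccInt
      · exact Filter.Eventually.of_forall hh_nonneg
      · exact Filter.Eventually.of_forall hE_sub
    have : (∫ x in Icc (s 0) T, h x) = ∫ t in (0:ℝ)..T, h t := by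
      rw [← hsplit, setIntegral_union hdisj2 measurableSet_Icc hIcoInt hIccInt0T,
        setIntegral_congr_fun measurableSet_Ico hIcoZero, integral_zero, zero_add,
        integral_Icc_eq_integral_Ioc, ← intervalIntegral.integral_of_le hT]
    linarith
  calc (∫ t in (0:ℝ)..T, ‖g1 t • u1 (t - T2 t)‖ ^ 2)
      ≤ ∫ t in (0:ℝ)..T, (1 - dT2 t) * h (s t) := step1
    _ = ∫ x in s '' S, h x := step2
    _ ≤ ∫ t in (0:ℝ)..T, h t := step3


/-- The time-varying-delay modified wave variable transformation is passive:
if û2(t) = g1(t)·u1(t − T2(t)) and v̂1(t) = g2(t)·v2(t − T1(t)) with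
g1² ≤ 1 − T2', g2² ≤ 1 − T1', T1' ≤ 1, T2' ≤ 1, and all signals vanish for
negative time, then ∫_0^T ‖û2‖² ≤ ∫_0^T ‖u1‖² and ∫_0^T ‖v̂1‖² ≤ ∫_0^T ‖v2‖². -/
theorem wave_variable_time_varying_delay_passive
    {m : ℕ}
    (T1 T2 : ℝ → ℝ) (dT1 dT2 : ℝ → ℝ)
    (hT1nonneg : ∀ t, 0 ≤ T1 t) (hT2nonneg : ∀ t, 0 ≤ T2 t)
    (hT1deriv : ∀ t, HasDerivAt T1 (dT1 t) t)
    (hT2deriv : ∀ t, HasDerivAt T2 (dT2 t) t)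
    (hdT1 : ∀ t, dT1 t ≤ 1) (hdT2 : ∀ t, dT2 t ≤ 1)
    (g1 g2 : ℝ → ℝ)
    (hg1 : ∀ t, g1 t ^ 2 ≤ 1 - dT2 t)
    (hg2 : ∀ t, g2 t ^ 2 ≤ 1 - dT1 t)
    (u1 v2 u2hat v1hat : ℝ → EuclideanSpace ℝ (Fin m))
    (hu2hat : ∀ t, u2hat t = g1 t • u1 (t - T2 t))
    (hv1hat : ∀ t, v1hat t = g2 t • v2 (t - T1 t))
    (hu1zero : ∀ t < (0:ℝ), u1 t = 0)
    (hv2zero : ∀ t < (0:ℝ), v2 t = 0)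
    (hu1int : ∀ T : ℝ, 0 ≤ T →
      IntervalIntegrable (fun t => ‖u1 t‖ ^ 2) MeasureTheory.volume 0 T)
    (hv2int : ∀ T : ℝ, 0 ≤ T →
      IntervalIntegrable (fun t => ‖v2 t‖ ^ 2) MeasureTheory.volume 0 T)
    (hu2hatint : ∀ T : ℝ, 0 ≤ T →
      IntervalIntegrable (fun t => ‖u2hat t‖ ^ 2) MeasureTheory.volume 0 T)
    (hv1hatint : ∀ T : ℝ, 0 ≤ T →
      IntervalIntegrable (fun t => ‖v1hat t‖ ^ 2) MeasureTheory.volume 0 T) :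
    ∀ T : ℝ, 0 ≤ T →
      (∫ t in (0:ℝ)..T, ‖u2hat t‖ ^ 2) ≤ (∫ t in (0:ℝ)..T, ‖u1 t‖ ^ 2) ∧
      (∫ t in (0:ℝ)..T, ‖v1hat t‖ ^ 2) ≤ (∫ t in (0:ℝ)..T, ‖v2 t‖ ^ 2) := by
  intro T hT
  have h1 : (fun t => ‖u2hat t‖ ^ 2) = fun t => ‖g1 t • u1 (t - T2 t)‖ ^ 2 :=
    funext fun t => by rw [hu2hat]
  have h2 : (fun t => ‖v1hat t‖ ^ 2) = fun t => ‖g2 t • v2 (t - T1 t)‖ ^ 2 :=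
    funext fun t => by rw [hv1hat]
  constructor
  · have := key_bound T2 dT2 hT2nonneg hT2deriv hdT2 g1 hg1 u1 hu1zero T hT
      (hu1int T hT) (h1 ▸ hu2hatint T hT)
    simpa only [← h1] using this
  · have := key_bound T1 dT1 hT1nonneg hT1deriv hdT1 g2 hg2 v2 hv2zero T hT
      (hv2int T hT) (h2 ▸ hv1hatint T hT)
    simpa only [← h2] using this
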